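/- arXiv:2001.10769 — 12 statements merged into one kernel-verified Lean document; each statement's English description precedes it below -/
import Mathlib

section
/- Let E₁,…,E₁₀ be an isotropic 10-sequence in the Enriques lattice Λ. Then there exists D ∈ Λ with 3·D = E₁+⋯+E₁₀; moreover, any such D satisfies ⟨D,D⟩ = 10 and ⟨D,Eᵢ⟩ = 3 for every i ∈ {1,…,10}. (This is the lattice-theoretic content of Lemma 2.3 of the paper: the 3-divisibility of the sum of an isotropic 10-sequence.) -/
/-- Gram matrix of the Enriques lattice `U ⊕ E₈(-1)`: the orthogonal direct sum of the
hyperbolic plane and the negative of the E₈ Cartan matrix. -/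
def enriquesGram : Matrix (Fin 10) (Fin 10) ℤ :=
  !![0, 1, 0, 0, 0, 0, 0, 0, 0, 0;
     1, 0, 0, 0, 0, 0, 0, 0, 0, 0;
     0, 0, -2, 0, 1, 0, 0, 0, 0, 0;
     0, 0, 0, -2, 0, 1, 0, 0, 0, 0;
     0, 0, 1, 0, -2, 1, 0, 0, 0, 0;
     0, 0, 0, 1, 1, -2, 1, 0, 0, 0;
     0, 0, 0, 0, 0, 1, -2, 1, 0, 0;
     0, 0, 0, 0, 0, 0, 1, -2, 1, 0;
     0, 0, 0, 0, 0, 0, 0, 1, -2, 1;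
     0, 0, 0, 0, 0, 0, 0, 0, 1, -2]

/-- The symmetric bilinear pairing of the Enriques lattice `Λ = ℤ¹⁰`. -/
def epair (x y : Fin 10 → ℤ) : ℤ := ∑ i, ∑ j, x i * enriquesGram i j * y j

/-- An isotropic 10-sequence in the Enriques lattice: `⟨Eᵢ,Eᵢ⟩ = 0` and `⟨Eᵢ,Eⱼ⟩ = 1`
for `i ≠ j`. -/
def IsIsotropicTenSeq (E : Fin 10 → Fin 10 → ℤ) : Prop :=
  (∀ i, epair (E i) (E i) = 0) ∧ ∀ i j, i ≠ j → epair (E i) (E j) = 1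

open Matrix

/-! ### Auxiliary generic matrix lemmas -/

section Generic
variable {n R : Type*} [Fintype n] [DecidableEq n] [CommRing R]

lemma auxDetFactor (T P K U : Matrix n n R) (h : T * (P * K) = U) :
    T.det * (P.det * K.det) = U.det := by
  rw [← Matrix.det_mul, ← Matrix.det_mul, h]

lemma auxDetGram (M G K : Matrix n n R) (h : M * G * Mᵀ = K) :
    M.det * G.det * M.det = K.det := by
  rw [← h, Matrix.det_mul, Matrix.det_mul, Matrix.det_transpose]

lemma auxDetUnit (G H : Matrix n n R) (h : G * H = 1) : G.det * H.det = 1 := by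
  rw [← Matrix.det_mul, h, Matrix.det_one]

lemma auxAdj (M : Matrix n n R) (t w : n → R) (h : M.mulVec t = w) :
    M.adjugate.mulVec w = M.det • t := by
  rw [← h, Matrix.mulVec_mulVec, Matrix.adjugate_mul, Matrix.smul_mulVec,
    Matrix.one_mulVec]

lemma auxInv (H G : Matrix n n R) (h : H * G = 1) (t s : n → R) (ht : G.mulVec s = t) :
    H.mulVec t = s := by
  rw [← ht, Matrix.mulVec_mulVec, h, Matrix.one_mulVec]

end Generic

/-! ### The inverse of the Enriques Gram matrix -/

/-- Integer inverse of the (unimodular) Enriques Gram matrix. -/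
def egramInv : Matrix (Fin 10) (Fin 10) ℤ :=
  !![0, 1, 0, 0, 0, 0, 0, 0, 0, 0;
     1, 0, 0, 0, 0, 0, 0, 0, 0, 0;
     0, 0, -4, -5, -7, -10, -8, -6, -4, -2;
     0, 0, -5, -8, -10, -15, -12, -9, -6, -3;
     0, 0, -7, -10, -14, -20, -16, -12, -8, -4;
     0, 0, -10, -15, -20, -30, -24, -18, -12, -6;
     0, 0, -8, -12, -16, -24, -20, -15, -10, -5;
     0, 0, -6, -9, -12, -18, -15, -12, -8, -4;
     0, 0, -4, -6, -8, -12, -10, -8, -6, -3;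
     0, 0, -2, -3, -4, -6, -5, -4, -3, -2]

lemma egram_mul_inv : enriquesGram * egramInv = 1 := by decide

lemma egram_symm : ∀ i j, enriquesGram i j = enriquesGram j i := by
  intro i j; fin_cases i <;> fin_cases j <;> decide

/-! ### Bilinearity and symmetry of `epair` -/

lemma epair_comm (x y : Fin 10 → ℤ) : epair x y = epair y x := by
  simp only [epair]
  rw [Finset.sum_comm]
  refine Finset.sum_congr rfl fun k _ => Finset.sum_congr rfl fun i _ => ?_
  rw [egram_symm i k]; ring

lemma epair_sum_left (f : Fin 10 → Fin 10 → ℤ) (y : Fin 10 → ℤ) :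
    epair (∑ j, f j) y = ∑ j, epair (f j) y := by
  simp only [epair, Finset.sum_apply, Finset.sum_mul]
  exact (Finset.sum_congr rfl fun i _ => Finset.sum_comm).trans Finset.sum_comm

lemma epair_smul_left (c : ℤ) (x y : Fin 10 → ℤ) : epair (c • x) y = c * epair x y := by
  simp only [epair, Pi.smul_apply, smul_eq_mul, Finset.mul_sum]
  exact Finset.sum_congr rfl fun i _ => Finset.sum_congr rfl fun j _ => by ring

lemma epair_smul_right (c : ℤ) (x y : Fin 10 → ℤ) : epair x (c • y) = c * epair x y := by
  rw [epair_comm, epair_smul_left, epair_comm]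

/-! ### Determinant of the Gram matrix of an isotropic 10-sequence -/

/-- Gram matrix of an isotropic 10-sequence: zero diagonal, ones elsewhere. -/
def allK : Matrix (Fin 10) (Fin 10) ℤ := Matrix.of fun i j => if i = j then 0 else 1

def detTm : Matrix (Fin 10) (Fin 10) ℤ :=
  !![1, 0, 0, 0, 0, 0, 0, 0, 0, 0;
     0, 1, 0, 0, 0, 0, 0, 0, 0, 0;
     -1, -1, 1, 0, 0, 0, 0, 0, 0, 0;
     1, 1, 1, -2, 0, 0, 0, 0, 0, 0;
     1, 1, 1, 1, -3, 0, 0, 0, 0, 0;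
     1, 1, 1, 1, 1, -4, 0, 0, 0, 0;
     1, 1, 1, 1, 1, 1, -5, 0, 0, 0;
     1, 1, 1, 1, 1, 1, 1, -6, 0, 0;
     1, 1, 1, 1, 1, 1, 1, 1, -7, 0;
     1, 1, 1, 1, 1, 1, 1, 1, 1, -8]

def detUm : Matrix (Fin 10) (Fin 10) ℤ :=
  !![1, 0, 1, 1, 1, 1, 1, 1, 1, 1;
     0, 1, 1, 1, 1, 1, 1, 1, 1, 1;
     0, 0, -2, -1, -1, -1, -1, -1, -1, -1;
     0, 0, 0, 3, 1, 1, 1, 1, 1, 1;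
     0, 0, 0, 0, 4, 1, 1, 1, 1, 1;
     0, 0, 0, 0, 0, 5, 1, 1, 1, 1;
     0, 0, 0, 0, 0, 0, 6, 1, 1, 1;
     0, 0, 0, 0, 0, 0, 0, 7, 1, 1;
     0, 0, 0, 0, 0, 0, 0, 0, 8, 1;
     0, 0, 0, 0, 0, 0, 0, 0, 0, 9]

lemma detKfactor :
    detTm * ((Equiv.swap (0 : Fin 10) 1).permMatrix ℤ * allK) = detUm := by decide

lemma detTm_tri : ∀ i j : Fin 10, i < j → detTm i j = 0 := by
  intro i j; fin_cases i <;> fin_cases j <;> decide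
lemma detUm_tri : ∀ i j : Fin 10, j < i → detUm i j = 0 := by
  intro i j; fin_cases i <;> fin_cases j <;> decide

lemma det_detTm : detTm.det = -40320 :=
  (Matrix.det_of_lowerTriangular detTm fun i j hij => detTm_tri i j hij).trans (by decide)

lemma det_detUm : detUm.det = -362880 :=
  (Matrix.det_of_upperTriangular (M := detUm) fun i j hij => detUm_tri i j hij).trans
    (by decide)

lemma swapPerm_sq :
    (Equiv.swap (0 : Fin 10) 1).permMatrix ℤ * (Equiv.swap (0 : Fin 10) 1).permMatrix ℤ
      = 1 := by decide

lemma det_allK : allK.det = 9 ∨ allK.det = -9 := by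
  have hP : ((Equiv.swap (0 : Fin 10) 1).permMatrix ℤ).det = 1 ∨
      ((Equiv.swap (0 : Fin 10) 1).permMatrix ℤ).det = -1 :=
    Int.isUnit_iff.mp (IsUnit.of_mul_eq_one _ (auxDetUnit _ _ swapPerm_sq))
  have h := auxDetFactor _ _ _ _ detKfactor
  rw [det_detTm, det_detUm] at h
  rcases hP with hp | hp <;> rw [hp] at h
  · left; linarith
  · right; linarith

/-! ### Main theorem -/

/-- The sum of an isotropic 10-sequence in the Enriques lattice is 3-divisible, and any
`D` with `3D = E₁ + ⋯ + E₁₀` satisfies `⟨D,D⟩ = 10` and `⟨D,Eᵢ⟩ = 3` for all `i`. -/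
theorem isotropicTenSeq_sum_three_divisible
    (E : Fin 10 → Fin 10 → ℤ) (hE : IsIsotropicTenSeq E) :
    (∃ D : Fin 10 → ℤ, (3 : ℤ) • D = ∑ i, E i) ∧
      ∀ D : Fin 10 → ℤ, (3 : ℤ) • D = ∑ i, E i →
        epair D D = 10 ∧ ∀ i, epair D (E i) = 3 := by
  obtain ⟨h0, h1⟩ := hE
  -- row sums of the Gram matrix of the sequence
  have hsum : ∀ i, ∑ j, epair (E i) (E j) = 9 := by
    intro i
    rw [← Finset.add_sum_erase _ _ (Finset.mem_univ i), h0 i, zero_add,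
      Finset.sum_congr rfl fun j hj => h1 i j (Ne.symm (Finset.ne_of_mem_erase hj))]
    simp [Finset.card_erase_of_mem]
  have hES : ∀ i, epair (E i) (∑ j, E j) = 9 := by
    intro i
    rw [epair_comm, epair_sum_left]
    rw [Finset.sum_congr rfl fun j _ => epair_comm (E j) (E i)]
    exact hsum i
  have hSS : epair (∑ i, E i) (∑ i, E i) = 90 := by
    rw [epair_sum_left]
    simp [hES]
  -- the matrix whose rows are the Eᵢ, and its Gram relation
  have hMGM : Matrix.of E * enriquesGram * (Matrix.of E)ᵀ = allK := by
    ext i j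
    have hl : (Matrix.of E * enriquesGram * (Matrix.of E)ᵀ) i j = epair (E i) (E j) := by
      simp only [Matrix.mul_apply, Matrix.transpose_apply, Matrix.of_apply, epair,
        Finset.sum_mul]
      exact Finset.sum_comm
    rw [hl]
    by_cases h : i = j
    · simp [allK, h, h0]
    · simp [allK, h, h1 i j h]
  -- determinant bookkeeping: det(M)² = 9
  have hdet := auxDetGram _ _ _ hMGM
  have hdetG : enriquesGram.det = 1 ∨ enriquesGram.det = -1 :=
    Int.isUnit_iff.mp (IsUnit.of_mul_eq_one _ (auxDetUnit _ _ egram_mul_inv))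
  set d : ℤ := (Matrix.of E).det with hd
  have hd2 : d * d = 9 := by
    rcases det_allK with hk | hk <;> rw [hk] at hdet <;>
      rcases hdetG with h | h <;> rw [h] at hdet <;>
        nlinarith [mul_self_nonneg d, hdet]
  have hd3 : d = 3 ∨ d = -3 := by
    have h : (d - 3) * (d + 3) = 0 := by linear_combination hd2
    rcases mul_eq_zero.mp h with h | h
    · left; linarith
    · right; linarith
  -- t = G·S satisfies M·t = 9·1, hence d·t = 9·adj(M)·1, hence 3 ∣ t
  set t : Fin 10 → ℤ := enriquesGram.mulVec (∑ i, E i) with hT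
  have hMt : (Matrix.of E).mulVec t = fun _ => (9 : ℤ) := by
    funext i
    have h : (Matrix.of E).mulVec t i = epair (E i) (∑ j, E j) := by
      simp only [hT, Matrix.mulVec, dotProduct, epair, Matrix.of_apply,
        Finset.mul_sum, mul_assoc]
    rw [h, hES i]
  have ht : ∀ j, (3 : ℤ) ∣ t j := by
    have h9 := auxAdj (Matrix.of E) t (fun _ => (9 : ℤ)) hMt
    intro j
    have hj := congrFun h9 j
    simp only [Matrix.mulVec, dotProduct, Pi.smul_apply, smul_eq_mul] at hj
    rw [← Finset.sum_mul] at hj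
    rcases hd3 with h | h <;> rw [← hd, h] at hj
    · exact ⟨∑ k, (Matrix.of E).adjugate j k, by linarith⟩
    · exact ⟨-∑ k, (Matrix.of E).adjugate j k, by linarith⟩
  -- unimodularity: 3 divides S componentwise
  have hSd : ∀ k, (3 : ℤ) ∣ (∑ i, E i) k := by
    have hrec : egramInv.mulVec t = ∑ i, E i :=
      auxInv egramInv enriquesGram (mul_eq_one_comm.mp egram_mul_inv) t
        (∑ i, E i) hT.symm
    intro k
    rw [← hrec]
    simp only [Matrix.mulVec, dotProduct]
    exact Finset.dvd_sum fun j _ => (ht j).mul_left _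
  constructor
  · refine ⟨fun k => (∑ i, E i) k / 3, funext fun k => ?_⟩
    simpa using Int.mul_ediv_cancel' (hSd k)
  · intro D hD
    have hDE : ∀ i, epair D (E i) = 3 := by
      intro i
      have h3 : epair ((3 : ℤ) • D) (E i) = 9 := by
        rw [hD, epair_sum_left,
          Finset.sum_congr rfl fun j _ => epair_comm (E j) (E i)]
        exact hsum i
      rw [epair_smul_left] at h3; linarith
    refine ⟨?_, hDE⟩
    have h9 : epair ((3 : ℤ) • D) ((3 : ℤ) • D) = 90 := by rw [hD]; exact hSS
    rw [epair_smul_left, epair_smul_right] at h9; linarith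
end

section
/- Let E₁,…,E₁₀ be an isotropic 10-sequence in the Enriques lattice Λ. Then for every L ∈ Λ, the integer ⟨E₁,L⟩ + ⟨E₂,L⟩ + ⋯ + ⟨E₁₀,L⟩ is divisible by 3. (This is the lattice core of Theorem 1.4(b): the sum of the entries of the φ-vector of a polarization on an Enriques surface is divisible by 3.) -/
open Matrix

/-- The (integral) inverse of the unimodular Gram matrix of the Enriques lattice. -/
def enriquesGramInv : Matrix (Fin 10) (Fin 10) ℤ :=
  !![0, 1, 0, 0, 0, 0, 0, 0, 0, 0;
     1, 0, 0, 0, 0, 0, 0, 0, 0, 0;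
     0, 0, -4, -5, -7, -10, -8, -6, -4, -2;
     0, 0, -5, -8, -10, -15, -12, -9, -6, -3;
     0, 0, -7, -10, -14, -20, -16, -12, -8, -4;
     0, 0, -10, -15, -20, -30, -24, -18, -12, -6;
     0, 0, -8, -12, -16, -24, -20, -15, -10, -5;
     0, 0, -6, -9, -12, -18, -15, -12, -8, -4;
     0, 0, -4, -6, -8, -12, -10, -8, -6, -3;
     0, 0, -2, -3, -4, -6, -5, -4, -3, -2]

set_option maxRecDepth 100000 in
lemma enriquesGram_mul_inv : enriquesGram * enriquesGramInv = 1 := by decide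

/-- The Gram matrix of an isotropic 10-sequence, reduced mod 3. -/
def nMat : Matrix (Fin 10) (Fin 10) (ZMod 3) :=
  Matrix.of fun i j => if i = j then (0 : ZMod 3) else 1

set_option maxRecDepth 100000 in
lemma gram3_mul_inv3 :
    (enriquesGram.map (Int.cast : ℤ → ZMod 3)) * (enriquesGramInv.map (Int.cast : ℤ → ZMod 3))
      = 1 := by decide

set_option maxRecDepth 100000 in
lemma nMat_ones : nMat *ᵥ (fun _ => (1 : ZMod 3)) = 0 := by decide

/-- For any isotropic 10-sequence `E₁,…,E₁₀` in the Enriques lattice and any `L`, the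
integer `⟨E₁,L⟩ + ⋯ + ⟨E₁₀,L⟩` is divisible by 3. -/
theorem isotropicTenSeq_sum_pairing_three_dvd
    (E : Fin 10 → Fin 10 → ℤ) (hE : IsIsotropicTenSeq E) (L : Fin 10 → ℤ) :
    (3 : ℤ) ∣ ∑ i, epair (E i) L := by
  obtain ⟨h0, h1⟩ := hE
  haveI : Fact (Nat.Prime 3) := ⟨by norm_num⟩
  set A : Matrix (Fin 10) (Fin 10) (ZMod 3) := Matrix.of fun i j => ((E i j : ℤ) : ZMod 3)
    with hA
  set G3 : Matrix (Fin 10) (Fin 10) (ZMod 3) := enriquesGram.map (Int.cast : ℤ → ZMod 3)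
    with hG3
  set N : Matrix (Fin 10) (Fin 10) (ZMod 3) := nMat with hN
  -- casting epair
  have hepair : ∀ x y : Fin 10 → ℤ, ((epair x y : ℤ) : ZMod 3)
      = ∑ i, ∑ j, (x i : ZMod 3) * ((enriquesGram i j : ℤ) : ZMod 3) * (y j : ZMod 3) := by
    intro x y
    unfold epair
    push_cast
    rfl
  -- the Gram matrix of the Eᵢ, mod 3
  have hMentry : A * G3 * Aᵀ = N := by
    ext i j
    have key : (A * G3 * Aᵀ) i j = ((epair (E i) (E j) : ℤ) : ZMod 3) := by
      rw [hepair]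
      simp only [Matrix.mul_apply, Matrix.transpose_apply, hA, hG3, Matrix.map_apply,
        Matrix.of_apply]
      simp_rw [Finset.sum_mul]
      exact Finset.sum_comm.symm
    by_cases h : i = j
    · subst h
      rw [key, h0 i]
      simp [hN, nMat, Matrix.of_apply]
    · rw [key, h1 i j h]
      simp [hN, nMat, Matrix.of_apply, h]
  -- det G3 is nonzero
  have hGH3 : G3 * enriquesGramInv.map (Int.cast : ℤ → ZMod 3) = 1 := gram3_mul_inv3
  have hdetG3 : G3.det ≠ 0 :=
    (Matrix.isUnit_det_of_right_inverse hGH3).ne_zero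
  -- det N = 0 since N kills the all-ones vector
  have hNone : N *ᵥ (fun _ => (1 : ZMod 3)) = 0 := nMat_ones
  have hdetN : N.det = 0 := by
    rw [← Matrix.exists_mulVec_eq_zero_iff]
    exact ⟨fun _ => 1, fun h => one_ne_zero (congrFun h 0), hNone⟩
  -- hence det A = 0
  have hdetA : Aᵀ.det = 0 := by
    have h := hdetN
    rw [← hMentry, Matrix.det_mul, Matrix.det_mul] at h
    rcases mul_eq_zero.mp h with h' | h'
    · rcases mul_eq_zero.mp h' with h'' | h''
      · rw [Matrix.det_transpose]; exact h''
      · exact absurd h'' hdetG3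
    · exact h'
  -- get a nonzero kernel vector of Aᵀ
  obtain ⟨v, hvne, hv⟩ := Matrix.exists_mulVec_eq_zero_iff.mpr hdetA
  -- it is killed by N
  have hNv : N *ᵥ v = 0 := by
    rw [← hMentry, ← Matrix.mulVec_mulVec, hv, Matrix.mulVec_zero]
  -- so v is constant
  have hvconst : ∀ i, v i = ∑ j, v j := by
    intro i
    have h := congrFun hNv i
    simp only [Matrix.mulVec, dotProduct, hN, nMat, Matrix.of_apply, Pi.zero_apply] at h
    have key : ∀ j, (if i = j then (0 : ZMod 3) else 1) * v j
        = v j - (if i = j then v j else 0) := by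
      intro j
      by_cases hj : i = j <;> simp [hj]
    rw [Finset.sum_congr rfl fun j _ => key j, Finset.sum_sub_distrib,
      Finset.sum_ite_eq] at h
    simp only [Finset.mem_univ, if_true] at h
    exact (sub_eq_zero.mp h).symm
  -- the common value is nonzero
  set s : ZMod 3 := ∑ j, v j with hs
  have hsne : s ≠ 0 := by
    intro h
    apply hvne
    funext i
    simp [hvconst i, h]
  -- columns of A sum to zero
  have hcol : ∀ k, ∑ i, ((E i k : ℤ) : ZMod 3) = 0 := by
    intro k
    have h := congrFun hv k
    simp only [Matrix.mulVec, dotProduct, Matrix.transpose_apply, hA,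
      Matrix.of_apply, Pi.zero_apply] at h
    have h2 : ∑ i, ((E i k : ℤ) : ZMod 3) * v i = (∑ i, ((E i k : ℤ) : ZMod 3)) * s := by
      rw [Finset.sum_mul]
      exact Finset.sum_congr rfl fun i _ => by rw [hvconst i]
    refine (mul_eq_zero.mp ?_).resolve_right hsne
    rw [← h2]
    exact h
  -- hence each column sum of E is divisible by 3
  have hdvd : ∀ k, (3 : ℤ) ∣ ∑ i, E i k := by
    intro k
    have := hcol k
    rw [← Int.cast_sum] at this
    exact_mod_cast (ZMod.intCast_zmod_eq_zero_iff_dvd _ 3).mp this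
  -- rearrange the goal sum
  have hre : ∑ i, epair (E i) L
      = ∑ k, ∑ j, (∑ i, E i k) * (enriquesGram k j * L j) := by
    unfold epair
    simp_rw [Finset.sum_mul, mul_assoc]
    rw [Finset.sum_comm]
    refine Finset.sum_congr rfl fun k _ => ?_
    rw [Finset.sum_comm]
  rw [hre]
  refine Finset.dvd_sum fun k _ => Finset.dvd_sum fun j _ => ?_
  exact (hdvd k).mul_right _
end

section
/- In the fundamental-presentation setting, for all integers a₀,a₁,…,a₇,a₉,a₁₀ the identity 9·⟨L,L⟩ = (φ₁+⋯+φ₁₀)² − 9·(φ₁²+⋯+φ₁₀²) holds, where φᵢ := ⟨Eᵢ,L⟩. (This is Theorem 1.4(d): L² = (1/9)(∑φᵢ)² − ∑φᵢ² for the φ-vector of a polarization on an Enriques surface.) -/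
theorem sum_univ_ten' {A : Type*} [AddCommMonoid A] (f : Fin 10 → A) :
    ∑ i, f i = f 0 + f 1 + f 2 + f 3 + f 4 + f 5 + f 6 + f 7 + f 8 + f 9 := by
  rw [Fin.sum_univ_castSucc, Fin.sum_univ_castSucc, Fin.sum_univ_eight]
  rfl

theorem phi_vector_square_identity {M : Type*} [AddCommGroup M]
    (B : M →ₗ[ℤ] M →ₗ[ℤ] ℤ) (hsymm : ∀ x y : M, B x y = B y x)
    (E : Fin 10 → M)
    (hE0 : ∀ i, B (E i) (E i) = 0)
    (hE1 : ∀ i j, i ≠ j → B (E i) (E j) = 1)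
    (D : M) (hD : (3 : ℤ) • D = ∑ i, E i)
    (a0 a1 a2 a3 a4 a5 a6 a7 a9 a10 : ℤ)
    (L : M)
    (hL : L = a1 • E 0 + a2 • E 1 + a3 • E 2 + a4 • E 3 + a5 • E 4 +
              a6 • E 5 + a7 • E 6 + a9 • E 8 + a10 • E 9 +
              a0 • (D - E 8 - E 9)) :
    9 * B L L = (∑ i, B (E i) L) ^ 2 - 9 * ∑ i, (B (E i) L) ^ 2 := by
  have hE' : ∀ i j, B (E i) (E j) = if i = j then 0 else 1 := by
    intro i j
    by_cases h : i = j
    · simp [h, hE0]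
    · simp [h, hE1 i j h]
  -- coefficients of 3L in the basis E
  set b : Fin 10 → ℤ := ![3*a1+a0, 3*a2+a0, 3*a3+a0, 3*a4+a0, 3*a5+a0,
      3*a6+a0, 3*a7+a0, a0, 3*a9-2*a0, 3*a10-2*a0] with hb
  set x : M := ∑ i, b i • E i with hx
  set S : ℤ := ∑ i, b i with hS
  set T : ℤ := ∑ i, (b i)^2 with hT
  have hb0 : b 0 = 3*a1+a0 := rfl
  have hb1 : b 1 = 3*a2+a0 := rfl
  have hb2 : b 2 = 3*a3+a0 := rfl
  have hb3 : b 3 = 3*a4+a0 := rfl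
  have hb4 : b 4 = 3*a5+a0 := rfl
  have hb5 : b 5 = 3*a6+a0 := rfl
  have hb6 : b 6 = 3*a7+a0 := rfl
  have hb7 : b 7 = a0 := rfl
  have hb8 : b 8 = 3*a9-2*a0 := rfl
  have hb9 : b 9 = 3*a10-2*a0 := rfl
  have hE7 : E 7 = (3:ℤ) • D - (E 0 + E 1 + E 2 + E 3 + E 4 + E 5 + E 6 + E 8 + E 9) := by
    rw [hD, sum_univ_ten']
    abel
  have h3L : (3:ℤ) • L = x := by
    rw [hL, hx, sum_univ_ten', hb0, hb1, hb2, hb3, hb4, hb5, hb6, hb7, hb8, hb9, hE7]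
    module
  have hφx : ∀ k, B (E k) x = S - b k := by
    intro k
    rw [hx, map_sum, hS]
    simp only [map_smul, smul_eq_mul, hE']
    have : ∀ j : Fin 10, b j * (if k = j then 0 else 1)
        = b j - (if k = j then b j else 0) := by
      intro j; split_ifs <;> ring
    rw [Finset.sum_congr rfl (fun j _ => this j), Finset.sum_sub_distrib,
      Finset.sum_ite_eq Finset.univ k b]
    simp
  have hxE : ∀ k, B x (E k) = S - b k := fun k => by rw [hsymm]; exact hφx k
  have hBx : B x x = S^2 - T := by
    conv_lhs => rw [hx, map_sum]
    simp only [LinearMap.coe_sum, Finset.sum_apply, LinearMap.smul_apply, map_smul,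
      smul_eq_mul, ← hx, hxE]
    have : ∀ j : Fin 10, b j * (S - b j) = b j * S - (b j)^2 := by intro j; ring
    rw [Finset.sum_congr rfl (fun j _ => this j), Finset.sum_sub_distrib,
      ← Finset.sum_mul, ← hS, ← hT]
    ring
  have h9 : 9 * B L L = S^2 - T := by
    have := hBx
    rw [← h3L, map_smul, map_smul, LinearMap.smul_apply, smul_eq_mul, smul_eq_mul] at this
    linarith
  have hφ : ∀ k, 3 * B (E k) L = S - b k := by
    intro k
    have := hφx k
    rw [← h3L, map_smul, smul_eq_mul] at this
    exact this
  have hP : (∑ i, B (E i) L) = 3 * S := by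
    have h : ∑ i, 3 * B (E i) L = ∑ i, (S - b i) :=
      Finset.sum_congr rfl (fun i _ => hφ i)
    rw [← Finset.mul_sum, Finset.sum_sub_distrib, Finset.sum_const, ← hS] at h
    simp at h
    omega
  have hQ : 9 * (∑ i, (B (E i) L)^2) = 8 * S^2 + T := by
    have h : ∑ i, (3 * B (E i) L)^2 = ∑ i, (S - b i)^2 :=
      Finset.sum_congr rfl (fun i _ => by rw [hφ i])
    have h1 : ∀ i : Fin 10, (3 * B (E i) L)^2 = 9 * (B (E i) L)^2 := by intro i; ring
    have h2 : ∀ i : Fin 10, (S - b i)^2 = S^2 - 2*S*(b i) + (b i)^2 := by intro i; ring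
    rw [Finset.sum_congr rfl (fun i _ => h1 i), Finset.sum_congr rfl (fun i _ => h2 i),
      ← Finset.mul_sum] at h
    rw [Finset.sum_add_distrib, Finset.sum_sub_distrib, Finset.sum_const,
      ← Finset.mul_sum, ← hS, ← hT] at h
    simp at h
    linarith
  rw [h9, hP]
  linarith
end

section
/- In the fundamental-presentation setting, the coefficients can be recovered from the intersection numbers φᵢ := ⟨Eᵢ,L⟩ via: aᵢ = φ₈ − φᵢ for i ∈ {1,…,7}; 3·a₉ = (φ₁+⋯+φ₁₀) − 6φ₈ − 3φ₉; 3·a₁₀ = (φ₁+⋯+φ₁₀) − 6φ₈ − 3φ₁₀; and 3·a₀ = (φ₁+⋯+φ₁₀) − 9φ₈. In particular, for a fixed isotropic 10-sequence and fixed D, the coefficients a₀,a₁,…,a₇,a₉,a₁₀ are uniquely determined by L. (This is the coefficient formula of Proposition 5.4 and the uniqueness part of Theorem 5.6.) -/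
theorem fund_aux {M : Type*} [AddCommGroup M]
    (B : M →ₗ[ℤ] M →ₗ[ℤ] ℤ) (hsymm : ∀ x y : M, B x y = B y x)
    (E : Fin 10 → M)
    (hE0 : ∀ i, B (E i) (E i) = 0)
    (hE1 : ∀ i j, i ≠ j → B (E i) (E j) = 1)
    (D : M) (hD : (3 : ℤ) • D = ∑ i, E i)
    (a0 a1 a2 a3 a4 a5 a6 a7 a9 a10 : ℤ)
    (L : M)
    (hL : L = a1 • E 0 + a2 • E 1 + a3 • E 2 + a4 • E 3 + a5 • E 4 +
              a6 • E 5 + a7 • E 6 + a9 • E 8 + a10 • E 9 +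
              a0 • (D - E 8 - E 9)) :
    a1 = B (E 7) L - B (E 0) L ∧
     a2 = B (E 7) L - B (E 1) L ∧
     a3 = B (E 7) L - B (E 2) L ∧
     a4 = B (E 7) L - B (E 3) L ∧
     a5 = B (E 7) L - B (E 4) L ∧
     a6 = B (E 7) L - B (E 5) L ∧
     a7 = B (E 7) L - B (E 6) L ∧
     3 * a9 = (∑ i, B (E i) L) - 6 * B (E 7) L - 3 * B (E 8) L ∧
     3 * a10 = (∑ i, B (E i) L) - 6 * B (E 7) L - 3 * B (E 9) L ∧
     3 * a0 = (∑ i, B (E i) L) - 9 * B (E 7) L := by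
  have hB : ∀ i j : Fin 10, B (E i) (E j) = if i = j then 0 else 1 := by
    intro i j
    by_cases h : i = j
    · simp [h, hE0]
    · simp [h, hE1 _ _ h]
  have h9 : ∀ i : Fin 10, B (E i) (∑ j, E j) = 9 := by
    intro i
    rw [map_sum]
    have e : ∀ x : Fin 10, B (E i) (E x) = 1 - if i = x then 1 else 0 := by
      intro x; rw [hB]; split <;> ring
    rw [Finset.sum_congr rfl fun x _ => e x, Finset.sum_sub_distrib, Finset.sum_ite_eq]
    simp
  have hD3 : ∀ i, B (E i) D = 3 := by
    intro i
    have h1 : B (E i) ((3:ℤ) • D) = 3 * B (E i) D := by simp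
    rw [hD, h9] at h1
    linarith
  have hDD : B D D = 10 := by
    have h1 : B ((3:ℤ) • D) ((3:ℤ) • D) = 9 * B D D := by simp; ring
    have h2 : B ((3:ℤ) • D) ((3:ℤ) • D) = 90 := by
      rw [hD, map_sum, Finset.sum_congr rfl fun x _ => (hsymm _ (E x)).trans (h9 x)]
      simp
    linarith
  have f0 : B (E 0) L = a2 + a3 + a4 + a5 + a6 + a7 + a9 + a10 + a0 := by
    rw [hL]; simp [hB, hD3] <;> ring
  have f1 : B (E 1) L = a1 + a3 + a4 + a5 + a6 + a7 + a9 + a10 + a0 := by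
    rw [hL]; simp [hB, hD3] <;> ring
  have f2 : B (E 2) L = a1 + a2 + a4 + a5 + a6 + a7 + a9 + a10 + a0 := by
    rw [hL]; simp [hB, hD3] <;> ring
  have f3 : B (E 3) L = a1 + a2 + a3 + a5 + a6 + a7 + a9 + a10 + a0 := by
    rw [hL]; simp [hB, hD3] <;> ring
  have f4 : B (E 4) L = a1 + a2 + a3 + a4 + a6 + a7 + a9 + a10 + a0 := by
    rw [hL]; simp [hB, hD3] <;> ring
  have f5 : B (E 5) L = a1 + a2 + a3 + a4 + a5 + a7 + a9 + a10 + a0 := by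
    rw [hL]; simp [hB, hD3] <;> ring
  have f6 : B (E 6) L = a1 + a2 + a3 + a4 + a5 + a6 + a9 + a10 + a0 := by
    rw [hL]; simp [hB, hD3] <;> ring
  have f7 : B (E 7) L = a1 + a2 + a3 + a4 + a5 + a6 + a7 + a9 + a10 + a0 := by
    rw [hL]; simp [hB, hD3] <;> ring
  have f8 : B (E 8) L = a1 + a2 + a3 + a4 + a5 + a6 + a7 + a10 + 2 * a0 := by
    rw [hL]; simp [hB, hD3] <;> ring
  have f9 : B (E 9) L = a1 + a2 + a3 + a4 + a5 + a6 + a7 + a9 + 2 * a0 := by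
    rw [hL]; simp [hB, hD3] <;> ring
  have hLD : B L D = 3 * (a1 + a2 + a3 + a4 + a5 + a6 + a7 + a9 + a10) + 4 * a0 := by
    rw [hL]
    simp [hD3, hDD]
    ring
  have hS : ∑ i, B (E i) L = 3 * B L D := by
    have h1 : ∑ i, B (E i) L = B L (∑ i, E i) := by
      rw [map_sum]
      exact Finset.sum_congr rfl fun i _ => hsymm _ _
    rw [h1, ← hD]
    simp
  refine ⟨by rw [f7, f0]; ring, by rw [f7, f1]; ring, by rw [f7, f2]; ring,
    by rw [f7, f3]; ring, by rw [f7, f4]; ring, by rw [f7, f5]; ring,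
    by rw [f7, f6]; ring, by rw [hS, hLD, f7, f8]; ring,
    by rw [hS, hLD, f7, f9]; ring, by rw [hS, hLD, f7]; ring⟩

theorem fundamental_coefficients_recovered_and_unique {M : Type*} [AddCommGroup M]
    (B : M →ₗ[ℤ] M →ₗ[ℤ] ℤ) (hsymm : ∀ x y : M, B x y = B y x)
    (E : Fin 10 → M)
    (hE0 : ∀ i, B (E i) (E i) = 0)
    (hE1 : ∀ i j, i ≠ j → B (E i) (E j) = 1)
    (D : M) (hD : (3 : ℤ) • D = ∑ i, E i)
    (a0 a1 a2 a3 a4 a5 a6 a7 a9 a10 : ℤ)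
    (L : M)
    (hL : L = a1 • E 0 + a2 • E 1 + a3 • E 2 + a4 • E 3 + a5 • E 4 +
              a6 • E 5 + a7 • E 6 + a9 • E 8 + a10 • E 9 +
              a0 • (D - E 8 - E 9)) :
    (a1 = B (E 7) L - B (E 0) L ∧
     a2 = B (E 7) L - B (E 1) L ∧
     a3 = B (E 7) L - B (E 2) L ∧
     a4 = B (E 7) L - B (E 3) L ∧
     a5 = B (E 7) L - B (E 4) L ∧
     a6 = B (E 7) L - B (E 5) L ∧
     a7 = B (E 7) L - B (E 6) L ∧
     3 * a9 = (∑ i, B (E i) L) - 6 * B (E 7) L - 3 * B (E 8) L ∧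
     3 * a10 = (∑ i, B (E i) L) - 6 * B (E 7) L - 3 * B (E 9) L ∧
     3 * a0 = (∑ i, B (E i) L) - 9 * B (E 7) L) ∧
    (∀ b0 b1 b2 b3 b4 b5 b6 b7 b9 b10 : ℤ,
      L = b1 • E 0 + b2 • E 1 + b3 • E 2 + b4 • E 3 + b5 • E 4 +
          b6 • E 5 + b7 • E 6 + b9 • E 8 + b10 • E 9 +
          b0 • (D - E 8 - E 9) →
      b0 = a0 ∧ b1 = a1 ∧ b2 = a2 ∧ b3 = a3 ∧ b4 = a4 ∧ b5 = a5 ∧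
        b6 = a6 ∧ b7 = a7 ∧ b9 = a9 ∧ b10 = a10) := by
  have h1 := fund_aux B hsymm E hE0 hE1 D hD a0 a1 a2 a3 a4 a5 a6 a7 a9 a10 L hL
  refine ⟨h1, ?_⟩
  intro b0 b1 b2 b3 b4 b5 b6 b7 b9 b10 hLb
  have h2 := fund_aux B hsymm E hE0 hE1 D hD b0 b1 b2 b3 b4 b5 b6 b7 b9 b10 L hLb
  obtain ⟨c1, c2, c3, c4, c5, c6, c7, c9, c10, c0⟩ := h1
  obtain ⟨d1, d2, d3, d4, d5, d6, d7, d9, d10, d0⟩ := h2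
  exact ⟨by linarith, by linarith, by linarith, by linarith, by linarith,
    by linarith, by linarith, by linarith, by linarith, by linarith⟩
end

section
/- In the fundamental-presentation setting with nonnegative integer coefficients: (1) if a₁ ≥ a₂ ≥ ⋯ ≥ a₇ ≥ 0 and a₀ ≥ a₉ ≥ a₁₀ ≥ 0, then φ₁ ≤ φ₂ ≤ ⋯ ≤ φ₁₀; and (2) for arbitrary integer coefficients the identity (φ₁+⋯+φ₇) − 2(φ₈+φ₉+φ₁₀) = 3(a₉+a₁₀−a₀) holds, so that φ₁+⋯+φ₇ ≥ 2(φ₈+φ₉+φ₁₀) if and only if a₉+a₁₀ ≥ a₀. (This establishes parts (a) and (c) of Theorem 1.4 for the φ-vector of a fundamental presentation.) -/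
theorem phi_vector_monotone_and_linear_identity {M : Type*} [AddCommGroup M]
    (B : M →ₗ[ℤ] M →ₗ[ℤ] ℤ) (hsymm : ∀ x y : M, B x y = B y x)
    (E : Fin 10 → M)
    (hE0 : ∀ i, B (E i) (E i) = 0)
    (hE1 : ∀ i j, i ≠ j → B (E i) (E j) = 1)
    (D : M) (hD : (3 : ℤ) • D = ∑ i, E i)
    (a0 a1 a2 a3 a4 a5 a6 a7 a9 a10 : ℤ)
    (L : M)
    (hL : L = a1 • E 0 + a2 • E 1 + a3 • E 2 + a4 • E 3 + a5 • E 4 +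
              a6 • E 5 + a7 • E 6 + a9 • E 8 + a10 • E 9 +
              a0 • (D - E 8 - E 9)) :
    ((a1 ≥ a2 ∧ a2 ≥ a3 ∧ a3 ≥ a4 ∧ a4 ≥ a5 ∧ a5 ≥ a6 ∧ a6 ≥ a7 ∧ 0 ≤ a7 ∧
      a0 ≥ a9 ∧ a9 ≥ a10 ∧ 0 ≤ a10 →
      B (E 0) L ≤ B (E 1) L ∧ B (E 1) L ≤ B (E 2) L ∧ B (E 2) L ≤ B (E 3) L ∧
      B (E 3) L ≤ B (E 4) L ∧ B (E 4) L ≤ B (E 5) L ∧ B (E 5) L ≤ B (E 6) L ∧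
      B (E 6) L ≤ B (E 7) L ∧ B (E 7) L ≤ B (E 8) L ∧ B (E 8) L ≤ B (E 9) L) ∧
     ((B (E 0) L + B (E 1) L + B (E 2) L + B (E 3) L + B (E 4) L + B (E 5) L +
        B (E 6) L) - 2 * (B (E 7) L + B (E 8) L + B (E 9) L)
          = 3 * (a9 + a10 - a0)) ∧
     (B (E 0) L + B (E 1) L + B (E 2) L + B (E 3) L + B (E 4) L + B (E 5) L +
        B (E 6) L ≥ 2 * (B (E 7) L + B (E 8) L + B (E 9) L) ↔
          a9 + a10 ≥ a0)) := by
  have hB : ∀ i j : Fin 10, B (E i) (E j) = if i = j then 0 else 1 := by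
    intro i j
    by_cases h : i = j
    · subst h; simp [hE0]
    · simp [h, hE1 i j h]
  have key : ∀ i, B (E i) D = 3 := by
    intro i
    have h := congrArg (B (E i)) hD
    rw [map_smul, map_sum] at h
    have hsum : ∑ j, B (E i) (E j) = 9 := by
      have : ∀ j, B (E i) (E j) = if i = j then (0:ℤ) else 1 := fun j => hB i j
      rw [Finset.sum_congr rfl (fun j _ => this j)]
      fin_cases i <;> decide
    rw [hsum, smul_eq_mul] at h
    linarith
  have p : ∀ i : Fin 10, B (E i) L =
      a1 • B (E i) (E 0) + a2 • B (E i) (E 1) + a3 • B (E i) (E 2) +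
      a4 • B (E i) (E 3) + a5 • B (E i) (E 4) + a6 • B (E i) (E 5) +
      a7 • B (E i) (E 6) + a9 • B (E i) (E 8) + a10 • B (E i) (E 9) +
      a0 • (B (E i) D - B (E i) (E 8) - B (E i) (E 9)) := by
    intro i
    rw [hL]
    simp [map_add, map_sub, map_smul]
  have p0 := p 0; have p1 := p 1; have p2 := p 2; have p3 := p 3
  have p4 := p 4; have p5 := p 5; have p6 := p 6; have p7 := p 7
  have p8 := p 8; have p9 := p 9
  simp only [hB, key, smul_eq_mul, Fin.isValue, Fin.reduceEq, reduceIte,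
    if_true, if_false, mul_zero, mul_one] at p0 p1 p2 p3 p4 p5 p6 p7 p8 p9
  refine ⟨fun h => ?_, ?_, ?_⟩
  · obtain ⟨h1, h2, h3, h4, h5, h6, h7, h8, h9, h10⟩ := h
    refine ⟨?_, ?_, ?_, ?_, ?_, ?_, ?_, ?_, ?_⟩ <;> omega
  · omega
  · omega
end

section
/- In the fundamental-presentation setting with arbitrary integer coefficients a₀,a₁,…,a₇,a₉,a₁₀: if all of φ₁,…,φ₁₀ are even, where φᵢ := ⟨Eᵢ,L⟩, then all of the coefficients a₀,a₁,…,a₇,a₉,a₁₀ are even. (This is the parity argument proving the nontrivial direction of Theorem 1.4(f): all entries of the φ-vector are even if and only if L is numerically 2-divisible.) -/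
set_option maxHeartbeats 1000000 in
theorem coefficients_even_of_phi_vector_even {M : Type*} [AddCommGroup M]
    (B : M →ₗ[ℤ] M →ₗ[ℤ] ℤ) (hsymm : ∀ x y : M, B x y = B y x)
    (E : Fin 10 → M)
    (hE0 : ∀ i, B (E i) (E i) = 0)
    (hE1 : ∀ i j, i ≠ j → B (E i) (E j) = 1)
    (D : M) (hD : (3 : ℤ) • D = ∑ i, E i)
    (a0 a1 a2 a3 a4 a5 a6 a7 a9 a10 : ℤ)
    (L : M)
    (hL : L = a1 • E 0 + a2 • E 1 + a3 • E 2 + a4 • E 3 + a5 • E 4 +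
              a6 • E 5 + a7 • E 6 + a9 • E 8 + a10 • E 9 +
              a0 • (D - E 8 - E 9)) :
    ((∀ i, 2 ∣ B (E i) L) →
      2 ∣ a0 ∧ 2 ∣ a1 ∧ 2 ∣ a2 ∧ 2 ∣ a3 ∧ 2 ∣ a4 ∧ 2 ∣ a5 ∧ 2 ∣ a6 ∧
        2 ∣ a7 ∧ 2 ∣ a9 ∧ 2 ∣ a10) := by
  intro h
  have hE' : ∀ i j : Fin 10, B (E i) (E j) = if i = j then 0 else 1 := by
    intro i j
    split
    · next heq => subst heq; exact hE0 i
    · next hne => exact hE1 i j hne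
  have hBD : ∀ i : Fin 10, B (E i) D = 3 := by
    intro i
    have h3 : (3 : ℤ) * B (E i) D = ∑ j, B (E i) (E j) := by
      rw [← map_sum, ← hD, map_smul, smul_eq_mul]
    have hsum : (∑ j, B (E i) (E j)) = 9 := by
      simp only [hE']
      have hx : ∀ x : Fin 10, (if i = x then (0:ℤ) else 1) = 1 - (if i = x then 1 else 0) := by
        intro x; split <;> ring
      simp only [hx, Finset.sum_sub_distrib, Finset.sum_const, Finset.sum_ite_eq]
      simp
    omega
  have key : ∀ i : Fin 10, B (E i) L =
      a1 * B (E i) (E 0) + a2 * B (E i) (E 1) + a3 * B (E i) (E 2) +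
      a4 * B (E i) (E 3) + a5 * B (E i) (E 4) + a6 * B (E i) (E 5) +
      a7 * B (E i) (E 6) + a9 * B (E i) (E 8) + a10 * B (E i) (E 9) +
      a0 * (3 - B (E i) (E 8) - B (E i) (E 9)) := by
    intro i
    rw [hL]
    simp [map_add, map_sub, map_smul, smul_eq_mul, hBD i]
  have h0 := h 0; have h1 := h 1; have h2 := h 2; have h3 := h 3
  have h4 := h 4; have h5 := h 5; have h6 := h 6; have h7 := h 7
  have h8 := h 8; have h9 := h 9
  rw [key 0] at h0; rw [key 1] at h1; rw [key 2] at h2; rw [key 3] at h3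
  rw [key 4] at h4; rw [key 5] at h5; rw [key 6] at h6; rw [key 7] at h7
  rw [key 8] at h8; rw [key 9] at h9
  simp only [hE'] at h0 h1 h2 h3 h4 h5 h6 h7 h8 h9
  set_option maxHeartbeats 1000000 in
  simp only [Fin.reduceEq, if_true, if_false, reduceIte] at h0 h1 h2 h3 h4 h5 h6 h7 h8 h9
  omega
end

section
/- Let a₀,a₁,…,a₇,a₉,a₁₀ be nonnegative integers with a₁ ≥ a₂ ≥ ⋯ ≥ a₇ and a₉+a₁₀ ≥ a₀ ≥ a₉ ≥ a₁₀, and suppose they are not all even. Then there exist nonnegative integers b₀,b₁,…,b₇,b₉,b₁₀ with b₀ = a₀, {b₁,b₂} = {a₁,a₂} as multisets, bᵢ = aᵢ for i ∈ {3,…,7}, and {b₉,b₁₀} = {a₉,a₁₀} as multisets, such that one of the following holds: (i) b₀ is odd and b₉ is even; (ii) b₀ is even and nonzero and b₉ is odd; (iii) b₀, b₉, b₁₀ are all odd and b₁ is even; (iv) bᵢ is odd for some i ∈ {2,…,7}. (This is the parity case analysis proved in Lemma 4.1 of the paper.) -/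
/-- Parity case analysis of Lemma 4.1: if the fundamental coefficients are not all even,
then after possibly swapping `a₁ ↔ a₂` and `a₉ ↔ a₁₀` one of the parity conditions
(i)–(iv) of Proposition 3.13 holds. -/
theorem parity_case_analysis_of_fundamental_coefficients
    (a0 a1 a2 a3 a4 a5 a6 a7 a9 a10 : ℤ)
    (h0 : 0 ≤ a0) (h1 : 0 ≤ a1) (h2 : 0 ≤ a2) (h3 : 0 ≤ a3) (h4 : 0 ≤ a4)
    (h5 : 0 ≤ a5) (h6 : 0 ≤ a6) (h7 : 0 ≤ a7) (h9 : 0 ≤ a9) (h10 : 0 ≤ a10)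
    (h12 : a1 ≥ a2) (h23 : a2 ≥ a3) (h34 : a3 ≥ a4) (h45 : a4 ≥ a5)
    (h56 : a5 ≥ a6) (h67 : a6 ≥ a7)
    (hA : a9 + a10 ≥ a0) (hB : a0 ≥ a9) (hC : a9 ≥ a10)
    (hodd : ¬(Even a0 ∧ Even a1 ∧ Even a2 ∧ Even a3 ∧ Even a4 ∧ Even a5 ∧
      Even a6 ∧ Even a7 ∧ Even a9 ∧ Even a10)) :
    ∃ b0 b1 b2 b3 b4 b5 b6 b7 b9 b10 : ℤ,
      0 ≤ b0 ∧ 0 ≤ b1 ∧ 0 ≤ b2 ∧ 0 ≤ b3 ∧ 0 ≤ b4 ∧ 0 ≤ b5 ∧ 0 ≤ b6 ∧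
      0 ≤ b7 ∧ 0 ≤ b9 ∧ 0 ≤ b10 ∧
      b0 = a0 ∧
      ((b1 = a1 ∧ b2 = a2) ∨ (b1 = a2 ∧ b2 = a1)) ∧
      b3 = a3 ∧ b4 = a4 ∧ b5 = a5 ∧ b6 = a6 ∧ b7 = a7 ∧
      ((b9 = a9 ∧ b10 = a10) ∨ (b9 = a10 ∧ b10 = a9)) ∧
      ((Odd b0 ∧ Even b9) ∨
       (Even b0 ∧ b0 ≠ 0 ∧ Odd b9) ∨
       (Odd b0 ∧ Odd b9 ∧ Odd b10 ∧ Even b1) ∨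
       (Odd b2 ∨ Odd b3 ∨ Odd b4 ∨ Odd b5 ∨ Odd b6 ∨ Odd b7)) := by
  by_cases hc2 : Odd a2 ∨ Odd a3 ∨ Odd a4 ∨ Odd a5 ∨ Odd a6 ∨ Odd a7
  · exact ⟨a0,a1,a2,a3,a4,a5,a6,a7,a9,a10, h0,h1,h2,h3,h4,h5,h6,h7,h9,h10, rfl,
      Or.inl ⟨rfl,rfl⟩, rfl,rfl,rfl,rfl,rfl, Or.inl ⟨rfl,rfl⟩,
      Or.inr (Or.inr (Or.inr hc2))⟩
  by_cases h1o : Odd a1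
  · exact ⟨a0,a2,a1,a3,a4,a5,a6,a7,a9,a10, h0,h2,h1,h3,h4,h5,h6,h7,h9,h10, rfl,
      Or.inr ⟨rfl,rfl⟩, rfl,rfl,rfl,rfl,rfl, Or.inl ⟨rfl,rfl⟩,
      Or.inr (Or.inr (Or.inr (Or.inl h1o)))⟩
  push_neg at hc2
  obtain ⟨n2,n3,n4,n5,n6,n7⟩ := hc2
  rw [Int.not_odd_iff_even] at h1o n2 n3 n4 n5 n6 n7
  rcases Int.even_or_odd a0 with e0 | o0
  · -- a0 even; some of a9,a10 odd
    rcases Int.even_or_odd a9 with e9 | o9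
    · rcases Int.even_or_odd a10 with e10 | o10
      · exact absurd ⟨e0,h1o,n2,n3,n4,n5,n6,n7,e9,e10⟩ hodd
      · -- swap 9/10; need a0 ≠ 0
        have hne : a0 ≠ 0 := by
          rcases o10 with ⟨k, hk⟩; omega
        exact ⟨a0,a1,a2,a3,a4,a5,a6,a7,a10,a9, h0,h1,h2,h3,h4,h5,h6,h7,h10,h9, rfl,
          Or.inl ⟨rfl,rfl⟩, rfl,rfl,rfl,rfl,rfl, Or.inr ⟨rfl,rfl⟩,
          Or.inr (Or.inl ⟨e0, hne, o10⟩)⟩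
    · have hne : a0 ≠ 0 := by
        rcases o9 with ⟨k, hk⟩; omega
      exact ⟨a0,a1,a2,a3,a4,a5,a6,a7,a9,a10, h0,h1,h2,h3,h4,h5,h6,h7,h9,h10, rfl,
        Or.inl ⟨rfl,rfl⟩, rfl,rfl,rfl,rfl,rfl, Or.inl ⟨rfl,rfl⟩,
        Or.inr (Or.inl ⟨e0, hne, o9⟩)⟩
  · rcases Int.even_or_odd a9 with e9 | o9
    · exact ⟨a0,a1,a2,a3,a4,a5,a6,a7,a9,a10, h0,h1,h2,h3,h4,h5,h6,h7,h9,h10, rfl,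
        Or.inl ⟨rfl,rfl⟩, rfl,rfl,rfl,rfl,rfl, Or.inl ⟨rfl,rfl⟩,
        Or.inl ⟨o0, e9⟩⟩
    · rcases Int.even_or_odd a10 with e10 | o10
      · exact ⟨a0,a1,a2,a3,a4,a5,a6,a7,a10,a9, h0,h1,h2,h3,h4,h5,h6,h7,h10,h9, rfl,
          Or.inl ⟨rfl,rfl⟩, rfl,rfl,rfl,rfl,rfl, Or.inr ⟨rfl,rfl⟩,
          Or.inl ⟨o0, e10⟩⟩
      · exact ⟨a0,a1,a2,a3,a4,a5,a6,a7,a9,a10, h0,h1,h2,h3,h4,h5,h6,h7,h9,h10, rfl,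
          Or.inl ⟨rfl,rfl⟩, rfl,rfl,rfl,rfl,rfl, Or.inl ⟨rfl,rfl⟩,
          Or.inr (Or.inr (Or.inl ⟨o0, o9, o10, h1o⟩))⟩
end

section
/- In the fundamental-presentation setting, assume the coefficients are nonnegative integers with a₁ ≥ a₂ ≥ ⋯ ≥ a₇ and a₉+a₁₀ ≥ a₀ ≥ a₉ ≥ a₁₀, and set a := a₀+a₁+⋯+a₇+a₉+a₁₀. Then: ⟨E₁,L⟩ ≤ ⟨E₂,L⟩ ≤ ⋯ ≤ ⟨E₇,L⟩ ≤ ⟨E₈,L⟩ = a; a ≤ ⟨E₉,L⟩, a ≤ ⟨E₉,₁₀,L⟩, and ⟨E₉,L⟩ ≤ ⟨E₁₀,L⟩; moreover, for every F ∈ M with ⟨F,Eᵢ⟩ ≥ 1 for all i ∈ {1,…,10} and ⟨F,E₉,₁₀⟩ ≥ 1, one has ⟨F,L⟩ ≥ ⟨E₉,L⟩. (This is the lattice core of Lemma 5.2: an isotropic 10-sequence appearing in a fundamental presentation realizes the lowest intersection numbers of L with effective isotropic classes.) -/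
/-- Pure integer arithmetic core for the final inequality. -/
lemma arith_core_lemma52 (a0 a9 a10 f8 f9 g : ℤ) (h0 : 0 ≤ a0) (h9 : 0 ≤ a9) (h10 : 0 ≤ a10)
    (h910 : a9 + a10 ≥ a0) (h9ge10 : a9 ≥ a10)
    (hf8 : 1 ≤ f8) (hf9 : 1 ≤ f9) (hg : 1 ≤ g)
    (hsum : 3 * g + 2 * f8 + 2 * f9 ≥ 8) :
    a9 * f8 + a10 * f9 + a0 * g ≥ 2 * a0 + a10 := by
  rcases le_or_gt 2 g with h | h
  · nlinarith [mul_nonneg h9 (by linarith : (0:ℤ) ≤ f8 - 1),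
      mul_nonneg h10 (by linarith : (0:ℤ) ≤ f9 - 1),
      mul_nonneg h0 (by linarith : (0:ℤ) ≤ g - 2)]
  · have hg1 : g = 1 := by omega
    subst hg1
    rcases le_or_gt 2 f9 with h' | h'
    · nlinarith [mul_nonneg h9 (by linarith : (0:ℤ) ≤ f8 - 1),
        mul_nonneg h10 (by linarith : (0:ℤ) ≤ f9 - 2)]
    · have hf91 : f9 = 1 := by omega
      subst hf91
      have : 2 ≤ f8 := by omega
      nlinarith [mul_nonneg h9 (by linarith : (0:ℤ) ≤ f8 - 2)]

/-- Lattice core of Lemma 5.2: an isotropic 10-sequence appearing in a fundamental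
presentation realizes the lowest intersection numbers of `L` with isotropic classes. -/
theorem fundamental_presentation_minimal_intersections {M : Type*} [AddCommGroup M]
    (B : M →ₗ[ℤ] M →ₗ[ℤ] ℤ) (hsymm : ∀ x y : M, B x y = B y x)
    (E : Fin 10 → M)
    (hE0 : ∀ i, B (E i) (E i) = 0)
    (hE1 : ∀ i j, i ≠ j → B (E i) (E j) = 1)
    (D : M) (hD : (3 : ℤ) • D = ∑ i, E i)
    (a0 a1 a2 a3 a4 a5 a6 a7 a9 a10 : ℤ)
    (h0 : 0 ≤ a0) (h1 : 0 ≤ a1) (h2 : 0 ≤ a2) (h3 : 0 ≤ a3) (h4 : 0 ≤ a4)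
    (h5 : 0 ≤ a5) (h6 : 0 ≤ a6) (h7 : 0 ≤ a7) (h9 : 0 ≤ a9) (h10 : 0 ≤ a10)
    (h12 : a1 ≥ a2) (h23 : a2 ≥ a3) (h34 : a3 ≥ a4) (h45 : a4 ≥ a5)
    (h56 : a5 ≥ a6) (h67 : a6 ≥ a7)
    (h910 : a9 + a10 ≥ a0) (h09 : a0 ≥ a9) (h9ge10 : a9 ≥ a10)
    (L : M)
    (hL : L = a1 • E 0 + a2 • E 1 + a3 • E 2 + a4 • E 3 + a5 • E 4 +
              a6 • E 5 + a7 • E 6 + a9 • E 8 + a10 • E 9 +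
              a0 • (D - E 8 - E 9))
    (a : ℤ) (ha : a = a0 + a1 + a2 + a3 + a4 + a5 + a6 + a7 + a9 + a10) :
    (B (E 0) L ≤ B (E 1) L ∧ B (E 1) L ≤ B (E 2) L ∧ B (E 2) L ≤ B (E 3) L ∧
     B (E 3) L ≤ B (E 4) L ∧ B (E 4) L ≤ B (E 5) L ∧ B (E 5) L ≤ B (E 6) L ∧
     B (E 6) L ≤ B (E 7) L) ∧
    B (E 7) L = a ∧
    a ≤ B (E 8) L ∧
    a ≤ B (D - E 8 - E 9) L ∧
    B (E 8) L ≤ B (E 9) L ∧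
    (∀ F : M, (∀ i, 1 ≤ B F (E i)) → 1 ≤ B F (D - E 8 - E 9) →
      B F L ≥ B (E 8) L) := by
  have hE1' : ∀ i j : Fin 10, B (E i) (E j) = if i = j then 0 else 1 := by
    intro i j
    by_cases h : i = j
    · subst h; simp [hE0]
    · simp [h, hE1 i j h]
  -- B (E i) D = 3
  have hED : ∀ i, B (E i) D = 3 := by
    intro i
    have h := congrArg (B (E i)) hD
    rw [map_smul, map_sum, smul_eq_mul] at h
    have hs : ∑ j, B (E i) (E j) = 9 := by
      simp only [hE1']
      have e : ∀ x : Fin 10, (if i = x then (0:ℤ) else 1) = 1 - (if i = x then 1 else 0) := by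
        intro x; by_cases h' : i = x <;> simp [h']
      simp only [e, Finset.sum_sub_distrib, Finset.sum_const, Finset.sum_ite_eq,
        Finset.mem_univ, if_true, Finset.card_univ, Fintype.card_fin]
      norm_num
    rw [hs] at h
    linarith
  have hDE : ∀ i, B D (E i) = 3 := fun i => by rw [hsymm]; exact hED i
  -- B D D = 10
  have hDD : B D D = 10 := by
    have h := congrArg (B D) hD
    rw [map_smul, map_sum, smul_eq_mul] at h
    simp only [hDE, Finset.sum_const, Finset.card_univ, Fintype.card_fin] at h
    norm_num at h
    linarith
  -- generic expansion of B v L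
  have hvL : ∀ v : M, B v L =
      a1 * B v (E 0) + a2 * B v (E 1) + a3 * B v (E 2) + a4 * B v (E 3) +
      a5 * B v (E 4) + a6 * B v (E 5) + a7 * B v (E 6) + a9 * B v (E 8) +
      a10 * B v (E 9) + a0 * (B v D - B v (E 8) - B v (E 9)) := by
    intro v
    rw [hL]
    simp only [map_add, map_smul, map_sub, smul_eq_mul]
    try ring
  -- values B (E i) L
  have e0 : B (E 0) L = a - a1 := by rw [hvL, hED]; simp [hE1']; omega
  have e1 : B (E 1) L = a - a2 := by rw [hvL, hED]; simp [hE1']; omega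
  have e2 : B (E 2) L = a - a3 := by rw [hvL, hED]; simp [hE1']; omega
  have e3 : B (E 3) L = a - a4 := by rw [hvL, hED]; simp [hE1']; omega
  have e4 : B (E 4) L = a - a5 := by rw [hvL, hED]; simp [hE1']; omega
  have e5 : B (E 5) L = a - a6 := by rw [hvL, hED]; simp [hE1']; omega
  have e6 : B (E 6) L = a - a7 := by rw [hvL, hED]; simp [hE1']; omega
  have e7 : B (E 7) L = a := by rw [hvL, hED]; simp [hE1']; omega
  have e8 : B (E 8) L = a + a0 - a9 := by rw [hvL, hED]; simp [hE1']; omega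
  have e9 : B (E 9) L = a + a0 - a10 := by rw [hvL, hED]; simp [hE1']; omega
  -- value for E_{9,10}
  have hvE : ∀ x, B (D - E 8 - E 9) x = B D x - B (E 8) x - B (E 9) x := by
    intro x; simp [map_sub]
  have e910 : B (D - E 8 - E 9) L = a - a0 + a9 + a10 := by
    rw [hvL]
    simp [hvE, hDE, hDD, hED, hE1']
    omega
  refine ⟨⟨?_, ?_, ?_, ?_, ?_, ?_, ?_⟩, ?_, ?_, ?_, ?_, ?_⟩
  · rw [e0, e1]; linarith
  · rw [e1, e2]; linarith
  · rw [e2, e3]; linarith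
  · rw [e3, e4]; linarith
  · rw [e4, e5]; linarith
  · rw [e5, e6]; linarith
  · rw [e6, e7]; linarith
  · exact e7
  · rw [e8]; linarith
  · rw [e910]; linarith
  · rw [e8, e9]; linarith
  · -- the minimality statement
    intro F hF hF910
    rw [e8, hvL F]
    -- relation 3 * B F D = ∑ B F (E i)
    have hFD : 3 * B F D = ∑ i, B F (E i) := by
      have h := congrArg (B F) hD
      rw [map_smul, map_sum, smul_eq_mul] at h
      exact h
    have hbig : 8 + B F (E 8) + B F (E 9) ≤ ∑ i, B F (E i) := by
      have hsub : ({8, 9} : Finset (Fin 10)) ⊆ Finset.univ := Finset.subset_univ _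
      have hcard : (Finset.univ \ ({8, 9} : Finset (Fin 10))).card = 8 := by decide
      rw [← Finset.sum_sdiff hsub, Finset.sum_pair (by decide : (8 : Fin 10) ≠ 9)]
      have hge : (8 : ℤ) ≤ ∑ i ∈ Finset.univ \ {8, 9}, B F (E i) := by
        calc (8 : ℤ) = ∑ _i ∈ (Finset.univ \ {8, 9} : Finset (Fin 10)), (1 : ℤ) := by
              rw [Finset.sum_const, hcard]; norm_num
          _ ≤ _ := Finset.sum_le_sum fun i _ => hF i
      linarith
    have hg : 1 ≤ B F D - B F (E 8) - B F (E 9) := by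
      have h' := hF910
      rw [map_sub, map_sub] at h'
      exact h'
    have key := arith_core_lemma52 a0 a9 a10 (B F (E 8)) (B F (E 9))
      (B F D - B F (E 8) - B F (E 9)) h0 h9 h10 h910 h9ge10 (hF 8) (hF 9) hg
      (by linarith)
    have hterms : a1 * B F (E 0) + a2 * B F (E 1) + a3 * B F (E 2) + a4 * B F (E 3) +
        a5 * B F (E 4) + a6 * B F (E 5) + a7 * B F (E 6) ≥
        a1 + a2 + a3 + a4 + a5 + a6 + a7 := by
      have p : ∀ (c : ℤ) (i : Fin 10), 0 ≤ c → c ≤ c * B F (E i) := by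
        intro c i hc
        nlinarith [hF i, mul_nonneg hc (by linarith [hF i] : (0:ℤ) ≤ B F (E i) - 1)]
      have := p a1 0 h1; have := p a2 1 h2; have := p a3 2 h3; have := p a4 3 h4
      have := p a5 4 h5; have := p a6 5 h6; have := p a7 6 h7
      linarith
    linarith
end

section
/- Let φ₁,…,φ₁₀ be integers with 0 < φ₁ ≤ φ₂ ≤ ⋯ ≤ φ₁₀, with φ₁+⋯+φ₁₀ divisible by 3, and with φ₁+⋯+φ₇ ≥ 2(φ₈+φ₉+φ₁₀). Then there exists an integer g ≥ 2 such that (φ₁+⋯+φ₁₀)² − 9(φ₁²+⋯+φ₁₀²) = 18(g−1); that is, the quantity (1/9)(∑φᵢ)² − ∑φᵢ² is a positive even integer, equal to 2g−2 for a unique integer g ≥ 2. (This is the statement, implicit in Theorems 1.4 and 1.5, that every tuple satisfying conditions (i)–(iii) determines a well-defined sectional genus g ≥ 2.) -/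
private lemma sq_sub_self_even (n : ℤ) : 2 ∣ n ^ 2 - n := by
  obtain ⟨c, hc⟩ := Int.even_mul_succ_self (n - 1)
  exact ⟨c, by linear_combination hc⟩

/-- Every 10-tuple satisfying conditions (i)–(iii) of Theorem 1.5 determines a
well-defined sectional genus `g ≥ 2` via `2g−2 = (1/9)(∑φᵢ)² − ∑φᵢ²`. -/
theorem genus_well_defined_from_phi_vector
    (φ1 φ2 φ3 φ4 φ5 φ6 φ7 φ8 φ9 φ10 : ℤ)
    (hpos : 0 < φ1)
    (h12 : φ1 ≤ φ2) (h23 : φ2 ≤ φ3) (h34 : φ3 ≤ φ4) (h45 : φ4 ≤ φ5)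
    (h56 : φ5 ≤ φ6) (h67 : φ6 ≤ φ7) (h78 : φ7 ≤ φ8) (h89 : φ8 ≤ φ9)
    (h910 : φ9 ≤ φ10)
    (hdvd : (3 : ℤ) ∣ (φ1 + φ2 + φ3 + φ4 + φ5 + φ6 + φ7 + φ8 + φ9 + φ10))
    (hineq : φ1 + φ2 + φ3 + φ4 + φ5 + φ6 + φ7 ≥ 2 * (φ8 + φ9 + φ10)) :
    ∃! g : ℤ, 2 ≤ g ∧
      (φ1 + φ2 + φ3 + φ4 + φ5 + φ6 + φ7 + φ8 + φ9 + φ10) ^ 2 -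
        9 * (φ1 ^ 2 + φ2 ^ 2 + φ3 ^ 2 + φ4 ^ 2 + φ5 ^ 2 + φ6 ^ 2 + φ7 ^ 2 +
          φ8 ^ 2 + φ9 ^ 2 + φ10 ^ 2) = 18 * (g - 1) := by
  set S := φ1 + φ2 + φ3 + φ4 + φ5 + φ6 + φ7 + φ8 + φ9 + φ10 with hS
  set P := φ1 ^ 2 + φ2 ^ 2 + φ3 ^ 2 + φ4 ^ 2 + φ5 ^ 2 + φ6 ^ 2 + φ7 ^ 2 +
      φ8 ^ 2 + φ9 ^ 2 + φ10 ^ 2 with hP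
  have hQpos : 0 < S ^ 2 - 9 * P := by
    rw [hS, hP]
    nlinarith [mul_pos hpos hpos,
      mul_pos hpos (lt_of_lt_of_le hpos (h12.trans (h23.trans (h34.trans
        (h45.trans (h56.trans (h67.trans (h78.trans (h89.trans h910)))))))))]
  obtain ⟨k, hk⟩ := hdvd
  have h2 : (2 : ℤ) ∣ k ^ 2 - P := by
    obtain ⟨c1, hc1⟩ := sq_sub_self_even φ1
    obtain ⟨c2, hc2⟩ := sq_sub_self_even φ2
    obtain ⟨c3, hc3⟩ := sq_sub_self_even φ3
    obtain ⟨c4, hc4⟩ := sq_sub_self_even φ4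
    obtain ⟨c5, hc5⟩ := sq_sub_self_even φ5
    obtain ⟨c6, hc6⟩ := sq_sub_self_even φ6
    obtain ⟨c7, hc7⟩ := sq_sub_self_even φ7
    obtain ⟨c8, hc8⟩ := sq_sub_self_even φ8
    obtain ⟨c9, hc9⟩ := sq_sub_self_even φ9
    obtain ⟨c10, hc10⟩ := sq_sub_self_even φ10
    obtain ⟨ck, hck⟩ := sq_sub_self_even k
    refine ⟨ck - c1 - c2 - c3 - c4 - c5 - c6 - c7 - c8 - c9 - c10 - k, ?_⟩
    have hk' : S = 3 * k := hk
    rw [hP]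
    rw [hS] at hk'
    linarith [hc1, hc2, hc3, hc4, hc5, hc6, hc7, hc8, hc9, hc10, hck]
  obtain ⟨m, hm⟩ := h2
  have hQ : S ^ 2 - 9 * P = 18 * m := by
    have : S ^ 2 = 9 * k ^ 2 := by rw [hk]; ring
    rw [this]; linarith [hm]
  have hm1 : 1 ≤ m := by nlinarith [hQpos, hQ]
  refine ⟨m + 1, ⟨by linarith, by rw [hQ]; ring⟩, ?_⟩
  rintro g ⟨-, hg⟩
  have : 18 * (g - 1) = 18 * m := by rw [← hg, hQ]
  linarith
end

section
/- Let g and φ₁,…,φ₁₀ be integers with 0 < φ₁ ≤ φ₂ ≤ ⋯ ≤ φ₁₀, with φ₁+⋯+φ₁₀ divisible by 3, with φ₁+⋯+φ₇ ≥ 2(φ₈+φ₉+φ₁₀), and with (φ₁+⋯+φ₁₀)² − 9(φ₁²+⋯+φ₁₀²) = 18(g−1). If φ₁ = 1, then φ₂ = g−1 and φ₃ = φ₄ = ⋯ = φ₁₀ = g. Conversely, for every integer g ≥ 2 the tuple (1, g−1, g, g, g, g, g, g, g, g) satisfies all the above conditions. (This is the classification in the paper's Example for genus g and φ = 1: there is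 exactly one irreducible component of ℰ_g with φ₁ = 1.) -/
/-- Conditions (i)–(iii) and (v) of Theorem 1.5 of the paper on a 10-tuple
`(φ₁,…,φ₁₀)` and the genus `g`: `0 < φ₁ ≤ ⋯ ≤ φ₁₀`, the sum is divisible by 3,
`φ₁+⋯+φ₇ ≥ 2(φ₈+φ₉+φ₁₀)`, and `(∑φᵢ)² − 9∑φᵢ² = 18(g−1)`. -/
def PhiConds (g φ1 φ2 φ3 φ4 φ5 φ6 φ7 φ8 φ9 φ10 : ℤ) : Prop :=
  0 < φ1 ∧ φ1 ≤ φ2 ∧ φ2 ≤ φ3 ∧ φ3 ≤ φ4 ∧ φ4 ≤ φ5 ∧ φ5 ≤ φ6 ∧ φ6 ≤ φ7 ∧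
    φ7 ≤ φ8 ∧ φ8 ≤ φ9 ∧ φ9 ≤ φ10 ∧
  (3 : ℤ) ∣ (φ1 + φ2 + φ3 + φ4 + φ5 + φ6 + φ7 + φ8 + φ9 + φ10) ∧
  φ1 + φ2 + φ3 + φ4 + φ5 + φ6 + φ7 ≥ 2 * (φ8 + φ9 + φ10) ∧
  (φ1 + φ2 + φ3 + φ4 + φ5 + φ6 + φ7 + φ8 + φ9 + φ10) ^ 2 -
      9 * (φ1 ^ 2 + φ2 ^ 2 + φ3 ^ 2 + φ4 ^ 2 + φ5 ^ 2 + φ6 ^ 2 + φ7 ^ 2 +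
        φ8 ^ 2 + φ9 ^ 2 + φ10 ^ 2) = 18 * (g - 1)

/-- Classification of φ-vectors with `φ₁ = 1`: the only possibility in genus `g` is
`(1, g−1, g, …, g)`, and conversely this tuple satisfies all conditions for every
`g ≥ 2`. -/
theorem phi_vector_classification_phi_eq_one
    (g φ1 φ2 φ3 φ4 φ5 φ6 φ7 φ8 φ9 φ10 : ℤ)
    (h : PhiConds g φ1 φ2 φ3 φ4 φ5 φ6 φ7 φ8 φ9 φ10) :
    (φ1 = 1 →
      φ2 = g - 1 ∧ φ3 = g ∧ φ4 = g ∧ φ5 = g ∧ φ6 = g ∧ φ7 = g ∧ φ8 = g ∧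
        φ9 = g ∧ φ10 = g) ∧
    (∀ g' : ℤ, 2 ≤ g' →
      PhiConds g' 1 (g' - 1) g' g' g' g' g' g' g' g') := by
  obtain ⟨h1, h12, h23, h34, h45, h56, h67, h78, h89, h910, hdvd, hineq, hq⟩ := h
  constructor
  · intro hφ1
    -- linear part: the tuple must be (1, m-1, m, ..., m) with m = φ3
    have hlin : φ2 = φ3 - 1 ∧ φ4 = φ3 ∧ φ5 = φ3 ∧ φ6 = φ3 ∧ φ7 = φ3 ∧
        φ8 = φ3 ∧ φ9 = φ3 ∧ φ10 = φ3 := by omega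
    obtain ⟨e2, e4, e5, e6, e7, e8, e9, e10⟩ := hlin
    rw [hφ1, e2, e4, e5, e6, e7, e8, e9, e10] at hq
    have hg : 18 * g = 18 * φ3 := by linear_combination -hq
    omega
  · intro g' hg'
    refine ⟨by norm_num, by omega, by omega, le_refl _, le_refl _, le_refl _,
      le_refl _, le_refl _, le_refl _, le_refl _, ⟨3 * g', by ring⟩, by omega, by ring⟩
end

section
/- Let g and φ₁,…,φ₁₀ be integers with 0 < φ₁ ≤ φ₂ ≤ ⋯ ≤ φ₁₀, with φ₁+⋯+φ₁₀ divisible by 3, with φ₁+⋯+φ₇ ≥ 2(φ₈+φ₉+φ₁₀), and with (φ₁+⋯+φ₁₀)² − 9(φ₁²+⋯+φ₁₀²) = 18(g−1). If φ₁ = 2, then exactly one of the following holds: (a) g is even, g ≥ 4, and (φ₁,…,φ₁₀) = (2, g/2, g/2, (g+2)/2, …, (g+2)/2) (entries 4 through 10 equal (g+2)/2); (b) g is odd, g ≥ 3, and (φ₁,…,φ₁₀) = (2, (g+1)/2, …, (g+1)/2, (g+3)/2) (entries 2 through 9 equal (g+1)/2); (c) g is odd, g ≥ 5, and (φ₁,…,φ₁₀)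 = (2, (g−1)/2, (g+3)/2, …, (g+3)/2) (entries 3 through 10 equal (g+3)/2). (This is the classification in the paper's Example for genus g and φ = 2.) -/
/-- Classification of φ-vectors with `φ₁ = 2` (the paper's Example for `φ = 2`):
exactly one of the three listed cases holds. -/
theorem phi_vector_classification_phi_eq_two
    (g φ1 φ2 φ3 φ4 φ5 φ6 φ7 φ8 φ9 φ10 : ℤ)
    (h : PhiConds g φ1 φ2 φ3 φ4 φ5 φ6 φ7 φ8 φ9 φ10)
    (h2 : φ1 = 2) :
    ((Even g ∧ 4 ≤ g ∧ 2 * φ2 = g ∧ 2 * φ3 = g ∧ 2 * φ4 = g + 2 ∧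
        2 * φ5 = g + 2 ∧ 2 * φ6 = g + 2 ∧ 2 * φ7 = g + 2 ∧ 2 * φ8 = g + 2 ∧
        2 * φ9 = g + 2 ∧ 2 * φ10 = g + 2) ∨
     (Odd g ∧ 3 ≤ g ∧ 2 * φ2 = g + 1 ∧ 2 * φ3 = g + 1 ∧ 2 * φ4 = g + 1 ∧
        2 * φ5 = g + 1 ∧ 2 * φ6 = g + 1 ∧ 2 * φ7 = g + 1 ∧ 2 * φ8 = g + 1 ∧
        2 * φ9 = g + 1 ∧ 2 * φ10 = g + 3) ∨
     (Odd g ∧ 5 ≤ g ∧ 2 * φ2 = g - 1 ∧ 2 * φ3 = g + 3 ∧ 2 * φ4 = g + 3 ∧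
        2 * φ5 = g + 3 ∧ 2 * φ6 = g + 3 ∧ 2 * φ7 = g + 3 ∧ 2 * φ8 = g + 3 ∧
        2 * φ9 = g + 3 ∧ 2 * φ10 = g + 3)) ∧
    ¬((Even g ∧ 4 ≤ g ∧ 2 * φ2 = g ∧ 2 * φ3 = g ∧ 2 * φ4 = g + 2 ∧
        2 * φ5 = g + 2 ∧ 2 * φ6 = g + 2 ∧ 2 * φ7 = g + 2 ∧ 2 * φ8 = g + 2 ∧
        2 * φ9 = g + 2 ∧ 2 * φ10 = g + 2) ∧
      (Odd g ∧ 3 ≤ g ∧ 2 * φ2 = g + 1 ∧ 2 * φ3 = g + 1 ∧ 2 * φ4 = g + 1 ∧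
        2 * φ5 = g + 1 ∧ 2 * φ6 = g + 1 ∧ 2 * φ7 = g + 1 ∧ 2 * φ8 = g + 1 ∧
        2 * φ9 = g + 1 ∧ 2 * φ10 = g + 3)) ∧
    ¬((Even g ∧ 4 ≤ g ∧ 2 * φ2 = g ∧ 2 * φ3 = g ∧ 2 * φ4 = g + 2 ∧
        2 * φ5 = g + 2 ∧ 2 * φ6 = g + 2 ∧ 2 * φ7 = g + 2 ∧ 2 * φ8 = g + 2 ∧
        2 * φ9 = g + 2 ∧ 2 * φ10 = g + 2) ∧
      (Odd g ∧ 5 ≤ g ∧ 2 * φ2 = g - 1 ∧ 2 * φ3 = g + 3 ∧ 2 * φ4 = g + 3 ∧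
        2 * φ5 = g + 3 ∧ 2 * φ6 = g + 3 ∧ 2 * φ7 = g + 3 ∧ 2 * φ8 = g + 3 ∧
        2 * φ9 = g + 3 ∧ 2 * φ10 = g + 3)) ∧
    ¬((Odd g ∧ 3 ≤ g ∧ 2 * φ2 = g + 1 ∧ 2 * φ3 = g + 1 ∧ 2 * φ4 = g + 1 ∧
        2 * φ5 = g + 1 ∧ 2 * φ6 = g + 1 ∧ 2 * φ7 = g + 1 ∧ 2 * φ8 = g + 1 ∧
        2 * φ9 = g + 1 ∧ 2 * φ10 = g + 3) ∧
      (Odd g ∧ 5 ≤ g ∧ 2 * φ2 = g - 1 ∧ 2 * φ3 = g + 3 ∧ 2 * φ4 = g + 3 ∧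
        2 * φ5 = g + 3 ∧ 2 * φ6 = g + 3 ∧ 2 * φ7 = g + 3 ∧ 2 * φ8 = g + 3 ∧
        2 * φ9 = g + 3 ∧ 2 * φ10 = g + 3)) := by
  obtain ⟨h1, h12, h23, h34, h45, h56, h67, h78, h89, h910, hdvd, hineq, hquad⟩ := h
  subst h2
  refine ⟨?_, ?_, ?_, ?_⟩
  · have key :
      (φ2 = φ7 ∧ φ3 = φ7 ∧ φ4 = φ7 ∧ φ5 = φ7 ∧ φ6 = φ7 ∧ φ8 = φ7 ∧ φ9 = φ7 ∧
        φ10 = φ7 + 1) ∨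
      (φ2 = φ7 - 1 ∧ φ3 = φ7 - 1 ∧ φ4 = φ7 ∧ φ5 = φ7 ∧ φ6 = φ7 ∧ φ8 = φ7 ∧
        φ9 = φ7 ∧ φ10 = φ7 ∧ 3 ≤ φ7) ∨
      (φ2 = φ7 - 2 ∧ φ3 = φ7 ∧ φ4 = φ7 ∧ φ5 = φ7 ∧ φ6 = φ7 ∧ φ8 = φ7 ∧
        φ9 = φ7 ∧ φ10 = φ7 ∧ 4 ≤ φ7) := by omega
    rcases key with ⟨e2, e3, e4, e5, e6, e8, e9, e10⟩ |
      ⟨e2, e3, e4, e5, e6, e8, e9, e10, ht⟩ |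
      ⟨e2, e3, e4, e5, e6, e8, e9, e10, ht⟩
    · rw [e2, e3, e4, e5, e6, e8, e9, e10] at hquad
      have hlin : 36 * φ7 - 36 = 18 * (g - 1) := by linear_combination hquad
      exact Or.inr (Or.inl ⟨⟨φ7 - 1, by omega⟩, by omega, by omega, by omega,
        by omega, by omega, by omega, by omega, by omega, by omega, by omega⟩)
    · rw [e2, e3, e4, e5, e6, e8, e9, e10] at hquad
      have hlin : 36 * φ7 - 54 = 18 * (g - 1) := by linear_combination hquad
      exact Or.inl ⟨⟨φ7 - 1, by omega⟩, by omega, by omega, by omega,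
        by omega, by omega, by omega, by omega, by omega, by omega, by omega⟩
    · rw [e2, e3, e4, e5, e6, e8, e9, e10] at hquad
      have hlin : 36 * φ7 - 72 = 18 * (g - 1) := by linear_combination hquad
      exact Or.inr (Or.inr ⟨⟨φ7 - 2, by omega⟩, by omega, by omega, by omega,
        by omega, by omega, by omega, by omega, by omega, by omega, by omega⟩)
  · rintro ⟨⟨he, -⟩, ⟨ho, -⟩⟩
    exact (Int.not_odd_iff_even.mpr he) ho
  · rintro ⟨⟨he, -⟩, ⟨ho, -⟩⟩
    exact (Int.not_odd_iff_even.mpr he) ho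
  · rintro ⟨⟨-, -, hb, -⟩, ⟨-, -, hc, -⟩⟩
    omega
end

section
/- Let g and φ₁,…,φ₁₀ be integers with 0 < φ₁ ≤ φ₂ ≤ ⋯ ≤ φ₁₀, with φ₁+⋯+φ₁₀ divisible by 3, with φ₁+⋯+φ₇ ≥ 2(φ₈+φ₉+φ₁₀), and with (φ₁+⋯+φ₁₀)² − 9(φ₁²+⋯+φ₁₀²) = 18(g−1). If φ₁ = 3, then exactly one of the following holds: (a) g ≡ 0 mod 3, g ≥ 6, and (φ₁,…,φ₁₀) = (3, (g+3)/3, …, (g+3)/3); (b) g ≡ 0 mod 3, g ≥ 9, and (φ₁,…,φ₁₀) = (3, g/3, (g+3)/3, (g+6)/3, …, (g+6)/3) (entries 4 through 10 equal (g+6)/3); (c) g ≡ 1 mod 3, g ≥ 7, and (φ₁,…,φ₁₀) = (3, (g+2)/3, (g+2)/3, (g+2)/3, (g+5)/3, …, (g+5)/3) (entries 5 through 10 equal (g+5)/3); (d) g ≡ 1 mod 3, g ≥ 10, and (φ₁,…,φ₁₀) = (3, (g−1)/3, (g+8)/3, …, (g+8)/3) (entries 3 through 10 equal (g+8)/3);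 (e) g ≡ 2 mod 3, g ≥ 8, and (φ₁,…,φ₁₀) = (3, (g+1)/3, (g+4)/3, …, (g+4)/3, (g+7)/3) (entries 3 through 9 equal (g+4)/3). (This is the classification in the paper's Example for genus g and φ = 3.) -/
/-- Case (a) of the classification for `φ₁ = 3`:
`g ≡ 0 mod 3`, `g ≥ 6`, `(φ₁,…,φ₁₀) = (3, (g+3)/3, …, (g+3)/3)`. -/
def Phi3CaseA (g φ2 φ3 φ4 φ5 φ6 φ7 φ8 φ9 φ10 : ℤ) : Prop :=
  g % 3 = 0 ∧ 6 ≤ g ∧ 3 * φ2 = g + 3 ∧ 3 * φ3 = g + 3 ∧ 3 * φ4 = g + 3 ∧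
    3 * φ5 = g + 3 ∧ 3 * φ6 = g + 3 ∧ 3 * φ7 = g + 3 ∧ 3 * φ8 = g + 3 ∧
    3 * φ9 = g + 3 ∧ 3 * φ10 = g + 3

/-- Case (b): `g ≡ 0 mod 3`, `g ≥ 9`,
`(φ₁,…,φ₁₀) = (3, g/3, (g+3)/3, (g+6)/3, …, (g+6)/3)`. -/
def Phi3CaseB (g φ2 φ3 φ4 φ5 φ6 φ7 φ8 φ9 φ10 : ℤ) : Prop :=
  g % 3 = 0 ∧ 9 ≤ g ∧ 3 * φ2 = g ∧ 3 * φ3 = g + 3 ∧ 3 * φ4 = g + 6 ∧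
    3 * φ5 = g + 6 ∧ 3 * φ6 = g + 6 ∧ 3 * φ7 = g + 6 ∧ 3 * φ8 = g + 6 ∧
    3 * φ9 = g + 6 ∧ 3 * φ10 = g + 6

/-- Case (c): `g ≡ 1 mod 3`, `g ≥ 7`,
`(φ₁,…,φ₁₀) = (3, (g+2)/3, (g+2)/3, (g+2)/3, (g+5)/3, …, (g+5)/3)`. -/
def Phi3CaseC (g φ2 φ3 φ4 φ5 φ6 φ7 φ8 φ9 φ10 : ℤ) : Prop :=
  g % 3 = 1 ∧ 7 ≤ g ∧ 3 * φ2 = g + 2 ∧ 3 * φ3 = g + 2 ∧ 3 * φ4 = g + 2 ∧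
    3 * φ5 = g + 5 ∧ 3 * φ6 = g + 5 ∧ 3 * φ7 = g + 5 ∧ 3 * φ8 = g + 5 ∧
    3 * φ9 = g + 5 ∧ 3 * φ10 = g + 5

/-- Case (d): `g ≡ 1 mod 3`, `g ≥ 10`,
`(φ₁,…,φ₁₀) = (3, (g−1)/3, (g+8)/3, …, (g+8)/3)`. -/
def Phi3CaseD (g φ2 φ3 φ4 φ5 φ6 φ7 φ8 φ9 φ10 : ℤ) : Prop :=
  g % 3 = 1 ∧ 10 ≤ g ∧ 3 * φ2 = g - 1 ∧ 3 * φ3 = g + 8 ∧ 3 * φ4 = g + 8 ∧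
    3 * φ5 = g + 8 ∧ 3 * φ6 = g + 8 ∧ 3 * φ7 = g + 8 ∧ 3 * φ8 = g + 8 ∧
    3 * φ9 = g + 8 ∧ 3 * φ10 = g + 8

/-- Case (e): `g ≡ 2 mod 3`, `g ≥ 8`,
`(φ₁,…,φ₁₀) = (3, (g+1)/3, (g+4)/3, …, (g+4)/3, (g+7)/3)`. -/
def Phi3CaseE (g φ2 φ3 φ4 φ5 φ6 φ7 φ8 φ9 φ10 : ℤ) : Prop :=
  g % 3 = 2 ∧ 8 ≤ g ∧ 3 * φ2 = g + 1 ∧ 3 * φ3 = g + 4 ∧ 3 * φ4 = g + 4 ∧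
    3 * φ5 = g + 4 ∧ 3 * φ6 = g + 4 ∧ 3 * φ7 = g + 4 ∧ 3 * φ8 = g + 4 ∧
    3 * φ9 = g + 4 ∧ 3 * φ10 = g + 7

set_option maxHeartbeats 1600000 in
/-- Classification of φ-vectors with `φ₁ = 3` (the paper's Example for `φ = 3`):
exactly one of the five listed cases holds. -/
theorem phi_vector_classification_phi_eq_three
    (g φ1 φ2 φ3 φ4 φ5 φ6 φ7 φ8 φ9 φ10 : ℤ)
    (h : PhiConds g φ1 φ2 φ3 φ4 φ5 φ6 φ7 φ8 φ9 φ10)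
    (h3 : φ1 = 3) :
    (Phi3CaseA g φ2 φ3 φ4 φ5 φ6 φ7 φ8 φ9 φ10 ∨
     Phi3CaseB g φ2 φ3 φ4 φ5 φ6 φ7 φ8 φ9 φ10 ∨
     Phi3CaseC g φ2 φ3 φ4 φ5 φ6 φ7 φ8 φ9 φ10 ∨
     Phi3CaseD g φ2 φ3 φ4 φ5 φ6 φ7 φ8 φ9 φ10 ∨
     Phi3CaseE g φ2 φ3 φ4 φ5 φ6 φ7 φ8 φ9 φ10) ∧
    ¬(Phi3CaseA g φ2 φ3 φ4 φ5 φ6 φ7 φ8 φ9 φ10 ∧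
      Phi3CaseB g φ2 φ3 φ4 φ5 φ6 φ7 φ8 φ9 φ10) ∧
    ¬(Phi3CaseA g φ2 φ3 φ4 φ5 φ6 φ7 φ8 φ9 φ10 ∧
      Phi3CaseC g φ2 φ3 φ4 φ5 φ6 φ7 φ8 φ9 φ10) ∧
    ¬(Phi3CaseA g φ2 φ3 φ4 φ5 φ6 φ7 φ8 φ9 φ10 ∧
      Phi3CaseD g φ2 φ3 φ4 φ5 φ6 φ7 φ8 φ9 φ10) ∧
    ¬(Phi3CaseA g φ2 φ3 φ4 φ5 φ6 φ7 φ8 φ9 φ10 ∧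
      Phi3CaseE g φ2 φ3 φ4 φ5 φ6 φ7 φ8 φ9 φ10) ∧
    ¬(Phi3CaseB g φ2 φ3 φ4 φ5 φ6 φ7 φ8 φ9 φ10 ∧
      Phi3CaseC g φ2 φ3 φ4 φ5 φ6 φ7 φ8 φ9 φ10) ∧
    ¬(Phi3CaseB g φ2 φ3 φ4 φ5 φ6 φ7 φ8 φ9 φ10 ∧
      Phi3CaseD g φ2 φ3 φ4 φ5 φ6 φ7 φ8 φ9 φ10) ∧
    ¬(Phi3CaseB g φ2 φ3 φ4 φ5 φ6 φ7 φ8 φ9 φ10 ∧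
      Phi3CaseE g φ2 φ3 φ4 φ5 φ6 φ7 φ8 φ9 φ10) ∧
    ¬(Phi3CaseC g φ2 φ3 φ4 φ5 φ6 φ7 φ8 φ9 φ10 ∧
      Phi3CaseD g φ2 φ3 φ4 φ5 φ6 φ7 φ8 φ9 φ10) ∧
    ¬(Phi3CaseC g φ2 φ3 φ4 φ5 φ6 φ7 φ8 φ9 φ10 ∧
      Phi3CaseE g φ2 φ3 φ4 φ5 φ6 φ7 φ8 φ9 φ10) ∧
    ¬(Phi3CaseD g φ2 φ3 φ4 φ5 φ6 φ7 φ8 φ9 φ10 ∧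
      Phi3CaseE g φ2 φ3 φ4 φ5 φ6 φ7 φ8 φ9 φ10) := by
  obtain ⟨h1, h2, ha3, ha4, ha5, ha6, ha7, ha8, ha9, ha10, hdvd, hineq, heq⟩ := h
  subst h3
  obtain ⟨d3, rfl⟩ : ∃ d, φ3 = φ2 + d := ⟨φ3 - φ2, by ring⟩
  obtain ⟨d4, rfl⟩ : ∃ d, φ4 = φ2 + d := ⟨φ4 - φ2, by ring⟩
  obtain ⟨d5, rfl⟩ : ∃ d, φ5 = φ2 + d := ⟨φ5 - φ2, by ring⟩
  obtain ⟨d6, rfl⟩ : ∃ d, φ6 = φ2 + d := ⟨φ6 - φ2, by ring⟩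
  obtain ⟨d7, rfl⟩ : ∃ d, φ7 = φ2 + d := ⟨φ7 - φ2, by ring⟩
  obtain ⟨d8, rfl⟩ : ∃ d, φ8 = φ2 + d := ⟨φ8 - φ2, by ring⟩
  obtain ⟨d9, rfl⟩ : ∃ d, φ9 = φ2 + d := ⟨φ9 - φ2, by ring⟩
  obtain ⟨d10, rfl⟩ : ∃ d, φ10 = φ2 + d := ⟨φ10 - φ2, by ring⟩
  constructor
  · have hd : (3:ℤ) ∣ (d3 + d4 + d5 + d6 + d7 + d8 + d9 + d10) := by
      clear heq hineq; omega
    have hS : d3+d4+d5+d6+d7+d8+d9+d10 = 0 ∨ d3+d4+d5+d6+d7+d8+d9+d10 = 1 ∨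
        d3+d4+d5+d6+d7+d8+d9+d10 = 6 ∨ d3+d4+d5+d6+d7+d8+d9+d10 = 7 ∨
        d3+d4+d5+d6+d7+d8+d9+d10 = 8 ∨ d3+d4+d5+d6+d7+d8+d9+d10 = 9 ∨
        d3+d4+d5+d6+d7+d8+d9+d10 = 15 ∨ d3+d4+d5+d6+d7+d8+d9+d10 = 16 ∨
        d3+d4+d5+d6+d7+d8+d9+d10 = 24 := by
      clear hd hdvd heq; omega
    rcases hS with hS|hS|hS|hS|hS|hS|hS|hS|hS
    · -- sum 0 : case A
      have hp : d3=0 ∧ d4=0 ∧ d5=0 ∧ d6=0 ∧ d7=0 ∧ d8=0 ∧ d9=0 ∧ d10=0 := by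
        clear hd hdvd heq; omega
      obtain ⟨e3, e4, e5, e6, e7, e8, e9, e10⟩ := hp
      subst e3 e4 e5 e6 e7 e8 e9 e10
      have hg : (18:ℤ) * (3 * φ2) = 18 * (g + 3) := by linear_combination heq
      left; unfold Phi3CaseA; omega
    · exfalso; clear heq; omega
    · -- sum 6 : case C
      have hp : d3=0 ∧ d4=0 ∧ d5=1 ∧ d6=1 ∧ d7=1 ∧ d8=1 ∧ d9=1 ∧ d10=1 := by
        clear hd hdvd heq; omega
      obtain ⟨e3, e4, e5, e6, e7, e8, e9, e10⟩ := hp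
      subst e3 e4 e5 e6 e7 e8 e9 e10
      have hg : (18:ℤ) * (3 * φ2) = 18 * (g + 2) := by linear_combination heq
      right; right; left; unfold Phi3CaseC; omega
    · exfalso; clear heq; omega
    · exfalso; clear heq; omega
    · -- sum 9 : case E
      have hp : d3=1 ∧ d4=1 ∧ d5=1 ∧ d6=1 ∧ d7=1 ∧ d8=1 ∧ d9=1 ∧ d10=2 := by
        clear hd hdvd heq; omega
      obtain ⟨e3, e4, e5, e6, e7, e8, e9, e10⟩ := hp
      subst e3 e4 e5 e6 e7 e8 e9 e10
      have hg : (18:ℤ) * (3 * φ2) = 18 * (g + 1) := by linear_combination heq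
      right; right; right; right; unfold Phi3CaseE; omega
    · -- sum 15 : case B
      have hp : d3=1 ∧ d4=2 ∧ d5=2 ∧ d6=2 ∧ d7=2 ∧ d8=2 ∧ d9=2 ∧ d10=2 := by
        clear hd hdvd heq; omega
      obtain ⟨e3, e4, e5, e6, e7, e8, e9, e10⟩ := hp
      subst e3 e4 e5 e6 e7 e8 e9 e10
      have hg : (18:ℤ) * (3 * φ2) = 18 * g := by linear_combination heq
      right; left; unfold Phi3CaseB; omega
    · exfalso; clear heq; omega
    · -- sum 24 : case D
      have hp : d3=3 ∧ d4=3 ∧ d5=3 ∧ d6=3 ∧ d7=3 ∧ d8=3 ∧ d9=3 ∧ d10=3 := by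
        clear hd hdvd heq; omega
      obtain ⟨e3, e4, e5, e6, e7, e8, e9, e10⟩ := hp
      subst e3 e4 e5 e6 e7 e8 e9 e10
      have hg : (18:ℤ) * (3 * φ2) = 18 * (g - 1) := by linear_combination heq
      right; right; right; left; unfold Phi3CaseD; omega
  · clear heq hdvd hineq
    unfold Phi3CaseA Phi3CaseB Phi3CaseC Phi3CaseD Phi3CaseE
    refine ⟨?_, ?_, ?_, ?_, ?_, ?_, ?_, ?_, ?_, ?_⟩ <;> (rintro ⟨hx, hy⟩; omega)
end
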